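/- Let ℓ ≥ 2 be even and let Γ be a finite abelian group with |Γ| = n. Suppose S ⊆ Γ is a symmetric set with 0 ∉ S such that R_ℓ(S) = Γ \ (S ∪ {0}) and 0 ∉ (ℓ+1)S. Then the Cayley graph Cay(Γ, S) is an |S|-regular n-vertex C_{ℓ+1}-saturated graph. -/

import Mathlib

/-- The `m`-fold sumset of `S`: all sums of `m` (not necessarily distinct) elements of `S`. -/
def sumset {Γ : Type*} [AddCommMonoid Γ] (m : ℕ) (S : Set Γ) : Set Γ :=
  {x | ∃ f : Fin m → Γ, (∀ i, f i ∈ S) ∧ ∑ i, f i = x}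

/-- `R_ℓ(S)`: sums `s₁ + ⋯ + s_ℓ` of elements of `S` in which no consecutive subsum
`s_i + s_{i+1} + ⋯ + s_j` with `i < j` vanishes. -/
def RSumset {Γ : Type*} [AddCommMonoid Γ] (m : ℕ) (S : Set Γ) : Set Γ :=
  {x | ∃ f : Fin m → Γ, (∀ i, f i ∈ S) ∧ ∑ i, f i = x ∧
      ∀ i j : Fin m, i < j → ∑ a ∈ Finset.Icc i j, f a ≠ 0}

/-- The Cayley graph of a symmetric set `S` (with `0 ∉ S`) in an additive group:
distinct `x` and `y` are adjacent iff `x - y ∈ S`. -/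
def cayley {Γ : Type*} [AddCommGroup Γ] (S : Set Γ) (hsym : ∀ s ∈ S, -s ∈ S) :
    SimpleGraph Γ where
  Adj x y := x ≠ y ∧ x - y ∈ S
  symm := by
    constructor
    rintro x y ⟨hxy, hmem⟩
    exact ⟨hxy.symm, by simpa [neg_sub] using hsym _ hmem⟩
  loopless := ⟨fun x h => h.1 rfl⟩

/-- `G` contains a cycle of length `m`. -/
def HasCycleLength {V : Type*} (G : SimpleGraph V) (m : ℕ) : Prop :=
  ∃ (v : V) (w : G.Walk v v), w.IsCycle ∧ w.length = m

/-- `G` is `C_m`-saturated: it has no cycle of length `m`, but adding any edge between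
two nonadjacent vertices creates a cycle of length `m`. -/
def CycleSaturated {V : Type*} (G : SimpleGraph V) (m : ℕ) : Prop :=
  ¬ HasCycleLength G m ∧
    ∀ x y : V, x ≠ y → ¬ G.Adj x y →
      HasCycleLength (G ⊔ SimpleGraph.fromEdgeSet {s(x, y)}) m

lemma walk_sum {Γ : Type*} [AddCommGroup Γ] {S : Set Γ} {hsym : ∀ s ∈ S, -s ∈ S}
    {u v : Γ} (w : (cayley S hsym).Walk u v) :
    ∃ f : Fin w.length → Γ, (∀ i, f i ∈ S) ∧ ∑ i, f i = u - v := by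
  induction w with
  | nil => exact ⟨fun i => i.elim0, fun i => i.elim0, by rw [sub_self]; exact Finset.sum_eq_zero (fun i _ => i.elim0)⟩
  | @cons a b c h q ih =>
    obtain ⟨f, hfS, hfsum⟩ := ih
    refine ⟨Fin.cons (a - b) f, ?_, ?_⟩
    · intro i
      refine Fin.cases ?_ ?_ i
      · simpa using h.2
      · intro j; simpa using hfS j
    · show ∑ i : Fin (q.length + 1), Fin.cons (a - b) f i = a - c
      rw [Fin.sum_cons, hfsum, sub_add_sub_cancel]

lemma walk_of_list {Γ : Type*} [AddCommGroup Γ] (S : Set Γ) (hsym : ∀ s ∈ S, -s ∈ S)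
    (h0 : (0 : Γ) ∉ S) :
    ∀ (L : List Γ) (x : Γ), (∀ a ∈ L, a ∈ S) →
      ∃ p : (cayley S hsym).Walk x (x + L.sum),
        p.support = (List.range (L.length + 1)).map (fun k => x + (L.take k).sum) := by
  intro L
  induction L with
  | nil =>
    intro x _
    refine ⟨(SimpleGraph.Walk.nil).copy rfl (by simp), ?_⟩
    rw [SimpleGraph.Walk.support_copy]; simp
  | cons a t ih =>
    intro x hmem
    have haS : a ∈ S := hmem a (by simp)
    have hadj : (cayley S hsym).Adj x (x + a) := by
      constructor
      · intro h
        exact h0 (by rwa [left_eq_add.mp h] at haS)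
      · simpa [sub_add_cancel_left] using hsym a haS
    obtain ⟨q, hq⟩ := ih (x + a) (fun b hb => hmem b (by simp [hb]))
    refine ⟨(SimpleGraph.Walk.cons hadj q).copy rfl (by rw [List.sum_cons, add_assoc]), ?_⟩
    rw [SimpleGraph.Walk.support_copy, SimpleGraph.Walk.support_cons,
      List.range_succ_eq_map, List.map_cons, List.map_map, hq]
    congr 1
    · simp
    · simp only [List.length_cons]
      apply List.map_congr_left
      intro k _
      simp [Function.comp, add_assoc]

lemma list_range_sum {Γ : Type*} [AddCommMonoid Γ] (g : ℕ → Γ) :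
    ∀ n, ((List.range n).map g).sum = ∑ k ∈ Finset.range n, g k := by
  intro n
  induction n with
  | zero => simp
  | succ n ih => rw [List.range_succ, Finset.sum_range_succ, List.map_append, List.sum_append, ih]; simp

theorem stmt8 (ℓ n : ℕ) (hℓe : Even ℓ) (hℓ : 2 ≤ ℓ)
    {Γ : Type*} [AddCommGroup Γ] [Fintype Γ] (hcard : Fintype.card Γ = n)
    (S : Set Γ) (hsym : ∀ s ∈ S, -s ∈ S) (h0 : (0 : Γ) ∉ S)
    (hR : RSumset ℓ S = Set.univ \ (S ∪ {0}))
    (h0sum : (0 : Γ) ∉ sumset (ℓ + 1) S) :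
    (∀ v, ((cayley S hsym).neighborSet v).ncard = S.ncard) ∧
    CycleSaturated (cayley S hsym) (ℓ + 1) := by
  constructor
  · -- regularity
    intro v
    have himg : (cayley S hsym).neighborSet v = (fun s => v - s) '' S := by
      ext w
      constructor
      · rintro ⟨hne, hmem⟩
        exact ⟨v - w, hmem, by simp⟩
      · rintro ⟨s, hs, rfl⟩
        refine ⟨?_, by simpa using hs⟩
        intro h
        have : s = 0 := by
          have := sub_eq_self.mp h.symm
          simpa using this
        exact h0 (this ▸ hs)
    rw [himg, Set.ncard_image_of_injective _ (fun a b h => by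
      simpa using sub_right_injective h)]
  constructor
  · -- no cycle of length ℓ+1
    rintro ⟨v, w, hc, hlen⟩
    obtain ⟨f, hfS, hfsum⟩ := walk_sum w
    have h0mem : (0 : Γ) ∈ sumset w.length S := ⟨f, hfS, by rw [hfsum, sub_self]⟩
    rw [hlen] at h0mem
    exact h0sum h0mem
  · -- saturation
    intro x y hxy hnadj
    have hxyS : x - y ∉ S := fun h => hnadj ⟨hxy, h⟩
    have hmem : x - y ∈ RSumset ℓ S := by
      rw [hR]
      exact ⟨Set.mem_univ _, by simp [hxyS, sub_ne_zero.mpr hxy]⟩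
    obtain ⟨f, hfS, hfsum, hfnz⟩ := hmem
    set g : ℕ → Γ := fun a => if h : a < ℓ then f ⟨a, h⟩ else 0 with hg
    have hgf : ∀ i : Fin ℓ, g i.1 = f i := by
      intro i; simp [hg, i.isLt]
    set L : List Γ := (List.range ℓ).map g with hL
    have hLlen : L.length = ℓ := by simp [hL]
    have hLmem : ∀ a ∈ L, a ∈ S := by
      intro a ha
      rw [hL, List.mem_map] at ha
      obtain ⟨k, hk, rfl⟩ := ha
      rw [List.mem_range] at hk
      rw [show g k = f ⟨k, hk⟩ from hgf ⟨k, hk⟩]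
      exact hfS _
    have hLsum : L.sum = x - y := by
      rw [hL, list_range_sum, ← Fin.sum_univ_eq_sum_range]
      rw [← hfsum]
      exact Finset.sum_congr rfl fun i _ => hgf i
    have htake : ∀ k, k ≤ ℓ → (L.take k).sum = ∑ a ∈ Finset.range k, g a := by
      intro k hk
      rw [hL, ← List.map_take, List.take_range, min_eq_left hk, list_range_sum]
    have hIco : ∀ i j : ℕ, i < j → j ≤ ℓ → ∑ a ∈ Finset.Ico i j, g a ≠ 0 := by
      intro i j hij hjl
      rcases eq_or_lt_of_le (Nat.succ_le_of_lt hij) with heq | hlt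
      · -- j = i + 1
        have hiℓ : i < ℓ := by omega
        rw [← heq, Nat.succ_eq_add_one, Finset.Ico_add_one_right_eq_Icc, Finset.Icc_self, Finset.sum_singleton,
          show g i = f ⟨i, hiℓ⟩ from hgf ⟨i, hiℓ⟩]
        exact fun h => h0 (h ▸ hfS ⟨i, hiℓ⟩)
      · -- i + 1 < j
        have hiℓ : i < ℓ := by omega
        have hjℓ : j - 1 < ℓ := by omega
        have hlt' : (⟨i, hiℓ⟩ : Fin ℓ) < ⟨j - 1, hjℓ⟩ := by
          rw [Fin.lt_def]; simp; omega
        have hkey := hfnz ⟨i, hiℓ⟩ ⟨j - 1, hjℓ⟩ hlt'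
        intro hzero
        apply hkey
        have h1 : ∑ a ∈ Finset.Icc (⟨i, hiℓ⟩ : Fin ℓ) ⟨j - 1, hjℓ⟩, f a
            = ∑ a ∈ (Finset.Icc (⟨i, hiℓ⟩ : Fin ℓ) ⟨j - 1, hjℓ⟩).map Fin.valEmbedding, g a := by
          rw [Finset.sum_map]
          exact Finset.sum_congr rfl fun a _ => (hgf a).symm
        have h2 : Finset.Ico i j = Finset.Icc i (j - 1) := by
          rw [← Finset.Ico_add_one_right_eq_Icc]; congr 1; omega
        rw [h1, Fin.map_valEmbedding_Icc, ← h2] at *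
        exact hzero
    obtain ⟨p, hps⟩ := walk_of_list S hsym h0 L y hLmem
    have heq : y + L.sum = x := by rw [hLsum]; abel
    set p' := p.copy rfl heq with hp'
    have hnodup : p'.support.Nodup := by
      rw [hp', SimpleGraph.Walk.support_copy, hps]
      apply List.Nodup.map_on ?_ List.nodup_range
      intro i hi j hj hij
      rw [List.mem_range, hLlen] at hi hj
      by_contra hne
      have key : ∀ a b : ℕ, a < b → b ≤ ℓ →
          y + (L.take a).sum ≠ y + (L.take b).sum := by
        intro a b hab hb hE
        rw [htake a (by omega), htake b hb] at hE
        have hE' := add_left_cancel hE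
        exact hIco a b hab hb (by
          rw [Finset.sum_Ico_eq_sub g hab.le, ← hE', sub_self])
      rcases Nat.lt_trichotomy i j with h | h | h
      · exact key i j h (by omega) hij
      · exact hne h
      · exact key j i h (by omega) hij.symm
    have hq : ∀ e ∈ p'.edges,
        e ∈ (cayley S hsym ⊔ SimpleGraph.fromEdgeSet {s(x, y)}).edgeSet := fun e he =>
      SimpleGraph.edgeSet_mono le_sup_left (p'.edges_subset_edgeSet he)
    set q := p'.transfer (cayley S hsym ⊔ SimpleGraph.fromEdgeSet {s(x, y)}) hq with hqdef
    have hadj : (cayley S hsym ⊔ SimpleGraph.fromEdgeSet {s(x, y)}).Adj x y := by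
      rw [SimpleGraph.sup_adj]
      right
      rw [SimpleGraph.fromEdgeSet_adj]
      exact ⟨rfl, hxy⟩
    refine ⟨x, SimpleGraph.Walk.cons hadj q, ?_, ?_⟩
    · rw [SimpleGraph.Walk.cons_isCycle_iff]
      constructor
      · rw [SimpleGraph.Walk.isPath_def, hqdef, SimpleGraph.Walk.support_transfer]
        exact hnodup
      · intro hmem
        rw [hqdef, SimpleGraph.Walk.edges_transfer] at hmem
        have := p'.edges_subset_edgeSet hmem
        rw [SimpleGraph.mem_edgeSet] at this
        exact hnadj this
    · rw [SimpleGraph.Walk.length_cons, hqdef, SimpleGraph.Walk.length_transfer]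
      have hsupp : p'.support.length = ℓ + 1 := by
        rw [hp', SimpleGraph.Walk.support_copy, hps]
        simp [hLlen]
      have := SimpleGraph.Walk.length_support p'
      omega
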